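/- Let P = {p₁,…,p₆} be the poset with relations generated by p₁ ≼ p₂, p₂ ≼ p₃, p₂ ≼ p₄, p₃ ≼ p₅ and p₄ ≼ p₆. Then F = E*_{p₁,p₅} + E*_{p₁,p₆} + E*_{p₂,p₃} + E*_{p₂,p₄} + E*_{p₂,p₆} is a Frobenius functional on g_A(P), and the spectrum of g_A(P) is binary: ad(F̂) has eigenvalue 0 with multiplicity 8 and eigenvalue 1 with multiplicity 8. -/

import Mathlib

/-!
Common definitions: for a finite poset `P`, identified with `{1,…,n}` via a linear
extension, represented by a relation `le` on `Fin n`, the type-A Lie poset algebra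
`gA le` is the Lie subalgebra of `sl(n, ℂ)` spanned by the matrix units `E p q`
for `p ≺ q` together with all trace-zero diagonal matrices (here realized as a
submodule of complex `n × n` matrices, which is closed under the commutator
bracket).  `gFull le` is the full Lie poset algebra `g(P)` (with all diagonal
matrices).  `FS S` is the functional `F_S = ∑_{(p,q) ∈ S} E*_{p,q}`.
-/

namespace LiePosets

noncomputable section

open scoped BigOperators

/-- Complex `n × n` matrices. -/
abbrev M (n : ℕ) : Type := Matrix (Fin n) (Fin n) ℂ

/-- The strict relation `p ≺ q` attached to a poset relation `le`. -/
def Strict {n : ℕ} (le : Fin n → Fin n → Prop) (p q : Fin n) : Prop := le p q ∧ p ≠ q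

/-- The type-A Lie poset algebra `g_A(P)`: trace-zero matrices supported on
relations of the poset (off-diagonal entries vanish off the strict relations). -/
def gA {n : ℕ} (le : Fin n → Fin n → Prop) : Submodule ℂ (M n) where
  carrier := {A | Matrix.trace A = 0 ∧ ∀ p q : Fin n, p ≠ q → ¬ le p q → A p q = 0}
  add_mem' := by
    rintro A B ⟨hA, hA'⟩ ⟨hB, hB'⟩
    exact ⟨by simp [hA, hB], fun p q h1 h2 => by
      simp [Matrix.add_apply, hA' p q h1 h2, hB' p q h1 h2]⟩
  zero_mem' := ⟨by simp, fun p q _ _ => by simp⟩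
  smul_mem' := by
    rintro c A ⟨hA, hA'⟩
    exact ⟨by simp [hA], fun p q h1 h2 => by
      simp [Matrix.smul_apply, hA' p q h1 h2]⟩

/-- The Lie poset algebra `g(P)` (all diagonal matrices allowed). -/
def gFull {n : ℕ} (le : Fin n → Fin n → Prop) : Submodule ℂ (M n) where
  carrier := {A | ∀ p q : Fin n, p ≠ q → ¬ le p q → A p q = 0}
  add_mem' := by
    rintro A B hA hB p q h1 h2
    simp [Matrix.add_apply, hA p q h1 h2, hB p q h1 h2]
  zero_mem' := fun p q _ _ => by simp
  smul_mem' := by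
    rintro c A hA p q h1 h2
    simp [Matrix.smul_apply, hA p q h1 h2]

/-- The functional `F_S = ∑_{(p,q) ∈ S} E*_{p,q}` reading off the sum of the
coefficients of the matrix entries indexed by `S`. -/
def FS {n : ℕ} (S : Finset (Fin n × Fin n)) : M n →ₗ[ℂ] ℂ where
  toFun A := ∑ pq ∈ S, A pq.1 pq.2
  map_add' A B := by simp [Matrix.add_apply, Finset.sum_add_distrib]
  map_smul' c A := by simp [Matrix.smul_apply, Finset.mul_sum]

/-- `F` is a Frobenius functional on the Lie subalgebra (submodule) `g`:
the kernel of the Kirillov form `B_F(x, y) = F ⁅x, y⁆` on `g` is trivial. -/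
def IsFrobeniusOn {n : ℕ} (g : Submodule ℂ (M n)) (F : M n →ₗ[ℂ] ℂ) : Prop :=
  ∀ x ∈ g, (∀ y ∈ g, F ⁅x, y⁆ = 0) → x = 0

/-- `H` is a principal element for `F` on `g`:  `B_F(H, ·) = F` on `g`. -/
def IsPrincipal {n : ℕ} (g : Submodule ℂ (M n)) (F : M n →ₗ[ℂ] ℂ) (H : M n) : Prop :=
  H ∈ g ∧ ∀ y ∈ g, F ⁅H, y⁆ = F y

/-- The adjoint action `ad H = ⁅H, -⁆` as a linear endomorphism of matrices. -/
def adE {n : ℕ} (H : M n) : Module.End ℂ (M n) :=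
  LinearMap.mulLeft ℂ H - LinearMap.mulRight ℂ H

/-- Multiplicity of `μ` as an eigenvalue of `ad H` acting on `g`. -/
def eigMult {n : ℕ} (g : Submodule ℂ (M n)) (H : M n) (μ : ℂ) : ℕ :=
  Module.finrank ℂ ↥(g ⊓ Module.End.eigenspace (adE H) μ)

/-- `g` has a binary spectrum: for any Frobenius functional `F` and corresponding
principal element `H`, the multiset of eigenvalues of `ad H` on `g` consists of an
equal number of `0`'s and `1`'s. -/
def HasBinarySpectrum {n : ℕ} (g : Submodule ℂ (M n)) : Prop :=
  ∀ (F : M n →ₗ[ℂ] ℂ) (H : M n), IsFrobeniusOn g F → IsPrincipal g F H →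
    eigMult g H 0 = eigMult g H 1 ∧
    eigMult g H 0 + eigMult g H 1 = Module.finrank ℂ ↥g

/-- The kernel of the Kirillov form `B_F` on `g`. -/
def kirKer {n : ℕ} (g : Submodule ℂ (M n)) (F : M n →ₗ[ℂ] ℂ) : Submodule ℂ (M n) where
  carrier := {x | x ∈ g ∧ ∀ y ∈ g, F ⁅x, y⁆ = 0}
  zero_mem' := ⟨g.zero_mem, fun y _ => by rw [Ring.lie_def, zero_mul, mul_zero, sub_zero, map_zero]⟩
  add_mem' := by
    rintro a b ⟨ha, ha'⟩ ⟨hb, hb'⟩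
    exact ⟨g.add_mem ha hb, fun y hy => by
      have h1 := ha' y hy
      have h2 := hb' y hy
      rw [Ring.lie_def] at h1 h2 ⊢
      rw [add_mul, mul_add, add_sub_add_comm, map_add, h1, h2, add_zero]⟩
  smul_mem' := by
    rintro c a ⟨ha, ha'⟩
    exact ⟨g.smul_mem c ha, fun y hy => by
      have h1 := ha' y hy
      rw [Ring.lie_def] at h1 ⊢
      rw [smul_mul_assoc, mul_smul_comm, ← smul_sub, map_smul, h1, smul_zero]⟩

/-- The index of the Lie algebra `g`: the minimum over all functionals of the
dimension of the kernel of the corresponding Kirillov form. -/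
def lieIndex {n : ℕ} (g : Submodule ℂ (M n)) : ℕ :=
  sInf {d : ℕ | ∃ F : M n →ₗ[ℂ] ℂ, d = Module.finrank ℂ ↥(kirKer g F)}

/-- The underlying undirected graph of the directed graph `Γ_{F_S}`. -/
def gammaGraph {n : ℕ} (S : Finset (Fin n × Fin n)) : SimpleGraph (Fin n) where
  Adj p q := p ≠ q ∧ ((p, q) ∈ S ∨ (q, p) ∈ S)
  symm := ⟨fun p q h => ⟨h.1.symm, h.2.symm⟩⟩
  loopless := ⟨fun p h => h.1 rfl⟩

/-- `F_S` is small: `S` consists of strict relations of the poset and `Γ_{F_S}`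
is a spanning tree of the comparability graph. -/
def Small {n : ℕ} (le : Fin n → Fin n → Prop) (S : Finset (Fin n × Fin n)) : Prop :=
  (∀ pq ∈ S, Strict le pq.1 pq.2) ∧ (gammaGraph S).IsTree

/-- `U_{F_S}(P)`: the sinks of `Γ_{F_S}`. -/
def sinks {n : ℕ} (S : Finset (Fin n × Fin n)) : Set (Fin n) :=
  {p | (∃ q, (q, p) ∈ S) ∧ ∀ q, (p, q) ∉ S}

/-- `D_{F_S}(P)`: the sources of `Γ_{F_S}`. -/
def sources {n : ℕ} (S : Finset (Fin n × Fin n)) : Set (Fin n) :=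
  {p | (∃ q, (p, q) ∈ S) ∧ ∀ q, (q, p) ∉ S}

/-- `B_{F_S}(P)`: the vertices of `Γ_{F_S}` that are neither sinks nor sources. -/
def betweens {n : ℕ} (S : Finset (Fin n × Fin n)) : Set (Fin n) :=
  {p | (∃ q, (p, q) ∈ S) ∧ ∃ q, (q, p) ∈ S}

/-- `U` is a filter (up-closed set) of the poset. -/
def IsPosetFilter {n : ℕ} (le : Fin n → Fin n → Prop) (U : Set (Fin n)) : Prop :=
  ∀ p ∈ U, ∀ q, le p q → q ∈ U

/-- `D` is an order ideal (down-closed set) of the poset. -/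
def IsPosetIdeal {n : ℕ} (le : Fin n → Fin n → Prop) (D : Set (Fin n)) : Prop :=
  ∀ p ∈ D, ∀ q, le q p → q ∈ D

/-- Helper to build elements of `Fin n` from natural numbers. -/
def fmk (n : ℕ) (h : 0 < n) (i : ℕ) : Fin n := ⟨i % n, Nat.mod_lt _ h⟩

/-- Restriction of a matrix along an embedding of index types. -/
def restrictMat {N K : ℕ} (f : Fin K → Fin N) (B : M N) : M K :=
  Matrix.of fun p q => B (f p) (f q)

/-- The poset `P₃ = {p₁,…,p₆}` generated by `p₁ ≼ p₂ ≼ p₃, p₄`, `p₃ ≼ p₅`,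
`p₄ ≼ p₆` (elements `pᵢ` indexed as `i - 1 : Fin 6`). -/
def leP3 : Fin 6 → Fin 6 → Prop := fun p q =>
  p = q ∨ (p.val, q.val) ∈
    ({(0,1),(0,2),(0,3),(0,4),(0,5),(1,2),(1,3),(1,4),(1,5),(2,4),(3,5)} : Set (ℕ × ℕ))

/-- The index set of
`F = E*_{p₁,p₅} + E*_{p₁,p₆} + E*_{p₂,p₃} + E*_{p₂,p₄} + E*_{p₂,p₆}`. -/
def SP3 : Finset (Fin 6 × Fin 6) := {(0,4),(0,5),(1,2),(1,3),(1,5)}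

lemma leP3_iff (p q : Fin 6) : leP3 p q ↔ (p = q ∨ (p.val, q.val) ∈
    ({(0,1),(0,2),(0,3),(0,4),(0,5),(1,2),(1,3),(1,4),(1,5),(2,4),(3,5)} : Finset (ℕ × ℕ))) := by
  simp [leP3]

instance : DecidableRel leP3 := fun p q => decidable_of_iff _ (leP3_iff p q).symm

lemma mem_gA_iff (A : M 6) : A ∈ gA leP3 ↔
    (Matrix.trace A = 0 ∧ ∀ p q : Fin 6, p ≠ q → ¬ leP3 p q → A p q = 0) := Iff.rfl

/-- matrix unit -/
def Em (p q : Fin 6) : M 6 := Matrix.of fun i j => if i = p ∧ j = q then 1 else 0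

lemma FS_SP3 (A : M 6) : FS SP3 A = A 0 4 + A 0 5 + A 1 2 + A 1 3 + A 1 5 := by
  show ∑ pq ∈ SP3, A pq.1 pq.2 = _
  rw [SP3]
  simp (config := { decide := true }) [Finset.sum_insert, Finset.mem_insert]
  ring

lemma Em_mem (p q : Fin 6) (h : leP3 p q) (hne : p ≠ q) : Em p q ∈ gA leP3 := by
  rw [mem_gA_iff]
  refine ⟨?_, ?_⟩
  · apply Finset.sum_eq_zero
    intro i _
    show (if i = p ∧ i = q then (1:ℂ) else 0) = 0
    rw [if_neg]
    rintro ⟨rfl, rfl⟩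
    exact hne rfl
  · intro a b h1 h2
    simp only [Em, Matrix.of_apply, ite_eq_right_iff, and_imp]
    rintro rfl rfl
    exact absurd h h2
def Dg (i : Fin 6) : M 6 := Em i i - Em 5 5

lemma Dg_mem (i : Fin 6) : Dg i ∈ gA leP3 := by
  rw [mem_gA_iff]
  refine ⟨?_, ?_⟩
  · show ∑ j, ((if (j:Fin 6) = i ∧ j = i then (1:ℂ) else 0) - (if j = 5 ∧ j = 5 then 1 else 0)) = 0
    fin_cases i <;> simp (config := { decide := true }) [Fin.sum_univ_six]
  · intro a b h1 _
    show (if a = i ∧ b = i then (1:ℂ) else 0) - (if a = 5 ∧ b = 5 then 1 else 0) = 0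
    rw [if_neg, if_neg, sub_zero]
    · rintro ⟨rfl, rfl⟩; exact h1 rfl
    · rintro ⟨rfl, rfl⟩; exact h1 rfl

set_option maxHeartbeats 2000000 in
lemma frob : IsFrobeniusOn (gA leP3) (FS SP3) := by
  intro x hx h
  obtain ⟨htr, hz⟩ := hx
  have z10 := hz 1 0 (by decide) (by decide)
  have z20 := hz 2 0 (by decide) (by decide)
  have z21 := hz 2 1 (by decide) (by decide)
  have z23 := hz 2 3 (by decide) (by decide)
  have z25 := hz 2 5 (by decide) (by decide)
  have z30 := hz 3 0 (by decide) (by decide)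
  have z31 := hz 3 1 (by decide) (by decide)
  have z32 := hz 3 2 (by decide) (by decide)
  have z34 := hz 3 4 (by decide) (by decide)
  have z40 := hz 4 0 (by decide) (by decide)
  have z41 := hz 4 1 (by decide) (by decide)
  have z42 := hz 4 2 (by decide) (by decide)
  have z43 := hz 4 3 (by decide) (by decide)
  have z45 := hz 4 5 (by decide) (by decide)
  have z50 := hz 5 0 (by decide) (by decide)
  have z51 := hz 5 1 (by decide) (by decide)
  have z52 := hz 5 2 (by decide) (by decide)
  have z53 := hz 5 3 (by decide) (by decide)
  have z54 := hz 5 4 (by decide) (by decide)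
  have e01 := h (Em 0 1) (Em_mem 0 1 (by decide) (by decide))
  rw [Ring.lie_def, FS_SP3] at e01
  simp (config := { decide := true }) [Em, Matrix.mul_apply, Matrix.sub_apply, Fin.sum_univ_six, z10, z20, z21, z23, z25, z30, z31, z32, z34, z40, z41, z42, z43, z45, z50, z51, z52, z53, z54] at e01
  have e02 := h (Em 0 2) (Em_mem 0 2 (by decide) (by decide))
  rw [Ring.lie_def, FS_SP3] at e02
  simp (config := { decide := true }) [Em, Matrix.mul_apply, Matrix.sub_apply, Fin.sum_univ_six, z10, z20, z21, z23, z25, z30, z31, z32, z34, z40, z41, z42, z43, z45, z50, z51, z52, z53, z54] at e02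
  have e03 := h (Em 0 3) (Em_mem 0 3 (by decide) (by decide))
  rw [Ring.lie_def, FS_SP3] at e03
  simp (config := { decide := true }) [Em, Matrix.mul_apply, Matrix.sub_apply, Fin.sum_univ_six, z10, z20, z21, z23, z25, z30, z31, z32, z34, z40, z41, z42, z43, z45, z50, z51, z52, z53, z54] at e03
  have e04 := h (Em 0 4) (Em_mem 0 4 (by decide) (by decide))
  rw [Ring.lie_def, FS_SP3] at e04
  simp (config := { decide := true }) [Em, Matrix.mul_apply, Matrix.sub_apply, Fin.sum_univ_six, z10, z20, z21, z23, z25, z30, z31, z32, z34, z40, z41, z42, z43, z45, z50, z51, z52, z53, z54] at e04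
  have e05 := h (Em 0 5) (Em_mem 0 5 (by decide) (by decide))
  rw [Ring.lie_def, FS_SP3] at e05
  simp (config := { decide := true }) [Em, Matrix.mul_apply, Matrix.sub_apply, Fin.sum_univ_six, z10, z20, z21, z23, z25, z30, z31, z32, z34, z40, z41, z42, z43, z45, z50, z51, z52, z53, z54] at e05
  have e12 := h (Em 1 2) (Em_mem 1 2 (by decide) (by decide))
  rw [Ring.lie_def, FS_SP3] at e12
  simp (config := { decide := true }) [Em, Matrix.mul_apply, Matrix.sub_apply, Fin.sum_univ_six, z10, z20, z21, z23, z25, z30, z31, z32, z34, z40, z41, z42, z43, z45, z50, z51, z52, z53, z54] at e12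
  have e13 := h (Em 1 3) (Em_mem 1 3 (by decide) (by decide))
  rw [Ring.lie_def, FS_SP3] at e13
  simp (config := { decide := true }) [Em, Matrix.mul_apply, Matrix.sub_apply, Fin.sum_univ_six, z10, z20, z21, z23, z25, z30, z31, z32, z34, z40, z41, z42, z43, z45, z50, z51, z52, z53, z54] at e13
  have e14 := h (Em 1 4) (Em_mem 1 4 (by decide) (by decide))
  rw [Ring.lie_def, FS_SP3] at e14
  simp (config := { decide := true }) [Em, Matrix.mul_apply, Matrix.sub_apply, Fin.sum_univ_six, z10, z20, z21, z23, z25, z30, z31, z32, z34, z40, z41, z42, z43, z45, z50, z51, z52, z53, z54] at e14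
  have e15 := h (Em 1 5) (Em_mem 1 5 (by decide) (by decide))
  rw [Ring.lie_def, FS_SP3] at e15
  simp (config := { decide := true }) [Em, Matrix.mul_apply, Matrix.sub_apply, Fin.sum_univ_six, z10, z20, z21, z23, z25, z30, z31, z32, z34, z40, z41, z42, z43, z45, z50, z51, z52, z53, z54] at e15
  have e24 := h (Em 2 4) (Em_mem 2 4 (by decide) (by decide))
  rw [Ring.lie_def, FS_SP3] at e24
  simp (config := { decide := true }) [Em, Matrix.mul_apply, Matrix.sub_apply, Fin.sum_univ_six, z10, z20, z21, z23, z25, z30, z31, z32, z34, z40, z41, z42, z43, z45, z50, z51, z52, z53, z54] at e24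
  have e35 := h (Em 3 5) (Em_mem 3 5 (by decide) (by decide))
  rw [Ring.lie_def, FS_SP3] at e35
  simp (config := { decide := true }) [Em, Matrix.mul_apply, Matrix.sub_apply, Fin.sum_univ_six, z10, z20, z21, z23, z25, z30, z31, z32, z34, z40, z41, z42, z43, z45, z50, z51, z52, z53, z54] at e35
  have d0 := h (Dg 0) (Dg_mem 0)
  rw [Ring.lie_def, FS_SP3] at d0
  simp (config := { decide := true }) [Dg, Em, Matrix.mul_apply, Matrix.sub_apply, Fin.sum_univ_six, z10, z20, z21, z23, z25, z30, z31, z32, z34, z40, z41, z42, z43, z45, z50, z51, z52, z53, z54] at d0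
  have d1 := h (Dg 1) (Dg_mem 1)
  rw [Ring.lie_def, FS_SP3] at d1
  simp (config := { decide := true }) [Dg, Em, Matrix.mul_apply, Matrix.sub_apply, Fin.sum_univ_six, z10, z20, z21, z23, z25, z30, z31, z32, z34, z40, z41, z42, z43, z45, z50, z51, z52, z53, z54] at d1
  have d2 := h (Dg 2) (Dg_mem 2)
  rw [Ring.lie_def, FS_SP3] at d2
  simp (config := { decide := true }) [Dg, Em, Matrix.mul_apply, Matrix.sub_apply, Fin.sum_univ_six, z10, z20, z21, z23, z25, z30, z31, z32, z34, z40, z41, z42, z43, z45, z50, z51, z52, z53, z54] at d2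
  have d3 := h (Dg 3) (Dg_mem 3)
  rw [Ring.lie_def, FS_SP3] at d3
  simp (config := { decide := true }) [Dg, Em, Matrix.mul_apply, Matrix.sub_apply, Fin.sum_univ_six, z10, z20, z21, z23, z25, z30, z31, z32, z34, z40, z41, z42, z43, z45, z50, z51, z52, z53, z54] at d3
  have d4 := h (Dg 4) (Dg_mem 4)
  rw [Ring.lie_def, FS_SP3] at d4
  simp (config := { decide := true }) [Dg, Em, Matrix.mul_apply, Matrix.sub_apply, Fin.sum_univ_six, z10, z20, z21, z23, z25, z30, z31, z32, z34, z40, z41, z42, z43, z45, z50, z51, z52, z53, z54] at d4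
  have tr : x 0 0 + x 1 1 + x 2 2 + x 3 3 + x 4 4 + x 5 5 = 0 := by
    simpa [Matrix.trace, Matrix.diag, Fin.sum_univ_six] using htr
  have h15 : x 1 5 = 0 := by linear_combination (1/2 : ℂ)*d0 - (1/2 : ℂ)*d1 - (1/2 : ℂ)*d2 - (1/2 : ℂ)*d3 + (1/2 : ℂ)*d4
  have h05 : x 0 5 = 0 := by linear_combination (-2/3 : ℂ)*d0 + (1/3 : ℂ)*d1 + (1/3 : ℂ)*d2 + (1/3 : ℂ)*d3 - (2/3 : ℂ)*d4
  have h04 : x 0 4 = 0 := by linear_combination (-1/6 : ℂ)*d0 - (1/6 : ℂ)*d1 - (1/6 : ℂ)*d2 - (1/6 : ℂ)*d3 + (5/6 : ℂ)*d4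
  have h12 : x 1 2 = 0 := by linear_combination (-1/6 : ℂ)*d0 - (1/6 : ℂ)*d1 + (5/6 : ℂ)*d2 - (1/6 : ℂ)*d3 - (1/6 : ℂ)*d4
  have h13 : x 1 3 = 0 := by linear_combination (-1/6 : ℂ)*d0 - (1/6 : ℂ)*d1 - (1/6 : ℂ)*d2 + (5/6 : ℂ)*d3 - (1/6 : ℂ)*d4
  have h14 : x 1 4 = 0 := by linear_combination -e01 - h15
  have h03 : x 0 3 = 0 := by linear_combination e35 - h13
  have h00 : x 0 0 = 0 := by linear_combination (1/6 : ℂ)*(tr + e04 + 4*e05 + 3*e14 - 3*e15 + e12 + e03 + e13)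
  have h44 : x 4 4 = 0 := by linear_combination h00 - e04
  have h55 : x 5 5 = 0 := by linear_combination h00 - e05
  have h11 : x 1 1 = 0 := by linear_combination e15 - e14 + h55
  have h22 : x 2 2 = 0 := by linear_combination h11 - e12
  have h33 : x 3 3 = 0 := by linear_combination h11 - e03 - e13
  ext i j
  simp only [Matrix.zero_apply]
  fin_cases i <;> fin_cases j <;> assumption
lemma finrank_of_equiv_fun {k : ℕ} (V : Submodule ℂ (M 6)) (f : (Fin k → ℂ) →ₗ[ℂ] M 6)
    (g : M 6 →ₗ[ℂ] (Fin k → ℂ)) (hf : ∀ c, f c ∈ V) (hgf : ∀ c, g (f c) = c)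
    (hfg : ∀ A ∈ V, f (g A) = A) : Module.finrank ℂ ↥V = k := by
  have e : (Fin k → ℂ) ≃ₗ[ℂ] ↥V :=
    { toFun := fun c => ⟨f c, hf c⟩
      map_add' := fun a b => Subtype.ext (map_add f a b)
      map_smul' := fun r a => Subtype.ext (map_smul f r a)
      invFun := fun A => g A.1
      left_inv := fun c => hgf c
      right_inv := fun A => Subtype.ext (hfg A.1 A.2) }
  rw [← e.finrank_eq, Module.finrank_fin_fun]

/-- principal element -/
def H0 : M 6 := Matrix.of fun i j => if i = j then (if i.val ≤ 1 then 2/3 else -1/3 : ℂ) else 0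

lemma H0_mem : H0 ∈ gA leP3 := by
  rw [mem_gA_iff]
  constructor
  · show ∑ i, _ = (0:ℂ)
    simp (config := { decide := true }) [H0, Fin.sum_univ_six, Matrix.diag]
    norm_num
  · intro p q h1 _
    simp [H0, Matrix.of_apply, if_neg h1]

lemma H0_principal : IsPrincipal (gA leP3) (FS SP3) H0 := by
  refine ⟨H0_mem, fun y _ => ?_⟩
  rw [Ring.lie_def, FS_SP3, FS_SP3]
  simp (config := { decide := true }) [H0, Matrix.mul_apply, Matrix.sub_apply, Fin.sum_univ_six]
  ring

lemma principal_unique (H : M 6) (hH : IsPrincipal (gA leP3) (FS SP3) H) : H = H0 := by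
  have hs : H - H0 ∈ gA leP3 := Submodule.sub_mem _ hH.1 H0_mem
  have : H - H0 = 0 := by
    apply frob (H - H0) hs
    intro y hy
    have h1 := hH.2 y hy
    have h2 := H0_principal.2 y hy
    rw [Ring.lie_def] at h1 h2 ⊢
    rw [sub_mul, mul_sub, sub_sub_sub_comm, map_sub, h1, h2, sub_self]
  linear_combination (norm := abel) this

def entG (c : Fin 16 → ℂ) (i j : Fin 6) : ℂ := if i = 0 ∧ j = 1 then c 0 else if i = 0 ∧ j = 2 then c 1 else if i = 0 ∧ j = 3 then c 2 else if i = 0 ∧ j = 4 then c 3 else if i = 0 ∧ j = 5 then c 4 else if i = 1 ∧ j = 2 then c 5 else if i = 1 ∧ j = 3 then c 6 else if i = 1 ∧ j = 4 then c 7 else if i = 1 ∧ j = 5 then c 8 else if i = 2 ∧ j = 4 then c 9 else if i = 3 ∧ j = 5 then c 10 else if i = 0 ∧ j = 0 then c 11 else if i = 1 ∧ j = 1 then c 12 else if i = 2 ∧ j = 2 then c 13 else if i = 3 ∧ j = 3 then c 14 else if i = 4 ∧ j = 4 then c 15 else if i = 5 ∧ j = 5 then -(c 11 + c 12 + c 13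 + c 14 + c 15) else 0

def matG : (Fin 16 → ℂ) →ₗ[ℂ] M 6 where
  toFun c := Matrix.of fun i j => entG c i j
  map_add' a b := by
    funext i j
    show entG (a+b) i j = entG a i j + entG b i j
    fin_cases i <;> fin_cases j <;> simp (config := { decide := true }) [entG] <;> ring
  map_smul' r a := by
    funext i j
    show entG (r • a) i j = r * entG a i j
    fin_cases i <;> fin_cases j <;> simp (config := { decide := true }) [entG] <;> ring

def coG : M 6 →ₗ[ℂ] (Fin 16 → ℂ) where
  toFun A := fun k => if k = 0 then A 0 1 else if k = 1 then A 0 2 else if k = 2 then A 0 3 else if k = 3 then A 0 4 else if k = 4 then A 0 5 else if k = 5 then A 1 2 else if k = 6 then A 1 3 else if k = 7 then A 1 4 else if k = 8 then A 1 5 else if k = 9 then A 2 4 else if k = 10 then A 3 5 else if k = 11 then A 0 0 else if k = 12 then A 1 1 else if k = 13 then A 2 2 else if k = 14 then A 3 3 else A 4 4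
  map_add' A B := by
    funext k
    fin_cases k <;> simp (config := { decide := true })
  map_smul' r A := by
    funext k
    fin_cases k <;> simp (config := { decide := true })

lemma coG_matG (c : Fin 16 → ℂ) : coG (matG c) = c := by
  funext k
  fin_cases k <;> simp (config := { decide := true }) [coG, matG, entG]


def entZ (c : Fin 8 → ℂ) (i j : Fin 6) : ℂ := if i = 0 ∧ j = 1 then c 0 else if i = 2 ∧ j = 4 then c 1 else if i = 3 ∧ j = 5 then c 2 else if i = 0 ∧ j = 0 then c 3 else if i = 1 ∧ j = 1 then c 4 else if i = 2 ∧ j = 2 then c 5 else if i = 3 ∧ j = 3 then c 6 else if i = 4 ∧ j = 4 then c 7 else if i = 5 ∧ j = 5 then -(c 3 + c 4 + c 5 + c 6 + c 7) else 0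

def matZ : (Fin 8 → ℂ) →ₗ[ℂ] M 6 where
  toFun c := Matrix.of fun i j => entZ c i j
  map_add' a b := by
    funext i j
    show entZ (a+b) i j = entZ a i j + entZ b i j
    fin_cases i <;> fin_cases j <;> simp (config := { decide := true }) [entZ] <;> ring
  map_smul' r a := by
    funext i j
    show entZ (r • a) i j = r * entZ a i j
    fin_cases i <;> fin_cases j <;> simp (config := { decide := true }) [entZ] <;> ring

def coZ : M 6 →ₗ[ℂ] (Fin 8 → ℂ) where
  toFun A := fun k => if k = 0 then A 0 1 else if k = 1 then A 2 4 else if k = 2 then A 3 5 else if k = 3 then A 0 0 else if k = 4 then A 1 1 else if k = 5 then A 2 2 else if k = 6 then A 3 3 else A 4 4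
  map_add' A B := by
    funext k
    fin_cases k <;> simp (config := { decide := true })
  map_smul' r A := by
    funext k
    fin_cases k <;> simp (config := { decide := true })

lemma coZ_matZ (c : Fin 8 → ℂ) : coZ (matZ c) = c := by
  funext k
  fin_cases k <;> simp (config := { decide := true }) [coZ, matZ, entZ]


def entO (c : Fin 8 → ℂ) (i j : Fin 6) : ℂ := if i = 0 ∧ j = 2 then c 0 else if i = 0 ∧ j = 3 then c 1 else if i = 0 ∧ j = 4 then c 2 else if i = 0 ∧ j = 5 then c 3 else if i = 1 ∧ j = 2 then c 4 else if i = 1 ∧ j = 3 then c 5 else if i = 1 ∧ j = 4 then c 6 else if i = 1 ∧ j = 5 then c 7 else 0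

def matO : (Fin 8 → ℂ) →ₗ[ℂ] M 6 where
  toFun c := Matrix.of fun i j => entO c i j
  map_add' a b := by
    funext i j
    show entO (a+b) i j = entO a i j + entO b i j
    fin_cases i <;> fin_cases j <;> simp (config := { decide := true }) [entO] <;> ring
  map_smul' r a := by
    funext i j
    show entO (r • a) i j = r * entO a i j
    fin_cases i <;> fin_cases j <;> simp (config := { decide := true }) [entO] <;> ring

def coO : M 6 →ₗ[ℂ] (Fin 8 → ℂ) where
  toFun A := fun k => if k = 0 then A 0 2 else if k = 1 then A 0 3 else if k = 2 then A 0 4 else if k = 3 then A 0 5 else if k = 4 then A 1 2 else if k = 5 then A 1 3 else if k = 6 then A 1 4 else A 1 5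
  map_add' A B := by
    funext k
    fin_cases k <;> simp (config := { decide := true })
  map_smul' r A := by
    funext k
    fin_cases k <;> simp (config := { decide := true })

lemma coO_matO (c : Fin 8 → ℂ) : coO (matO c) = c := by
  funext k
  fin_cases k <;> simp (config := { decide := true }) [coO, matO, entO]

set_option maxHeartbeats 4000000 in
lemma matG_mem (c : Fin 16 → ℂ) : matG c ∈ gA leP3 := by
  rw [mem_gA_iff]
  constructor
  · show ∑ i, _ = (0:ℂ)
    simp (config := { decide := true }) [matG, entG, Matrix.diag, Fin.sum_univ_six]
  · intro p q h1 h2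
    fin_cases p <;> fin_cases q <;>
      first
      | exact absurd rfl h1
      | exact absurd (by decide) h2
      | simp (config := { decide := true }) [matG, entG]

set_option maxHeartbeats 4000000 in
lemma finrank_gA : Module.finrank ℂ ↥(gA leP3) = 16 := by
  apply finrank_of_equiv_fun _ matG coG matG_mem coG_matG
  intro A hA
  obtain ⟨htr, hz⟩ := hA
  have tr : A 0 0 + A 1 1 + A 2 2 + A 3 3 + A 4 4 + A 5 5 = 0 := by
    simpa [Matrix.trace, Matrix.diag, Fin.sum_univ_six] using htr
  have z10 := hz 1 0 (by decide) (by decide)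
  have z20 := hz 2 0 (by decide) (by decide)
  have z21 := hz 2 1 (by decide) (by decide)
  have z23 := hz 2 3 (by decide) (by decide)
  have z25 := hz 2 5 (by decide) (by decide)
  have z30 := hz 3 0 (by decide) (by decide)
  have z31 := hz 3 1 (by decide) (by decide)
  have z32 := hz 3 2 (by decide) (by decide)
  have z34 := hz 3 4 (by decide) (by decide)
  have z40 := hz 4 0 (by decide) (by decide)
  have z41 := hz 4 1 (by decide) (by decide)
  have z42 := hz 4 2 (by decide) (by decide)
  have z43 := hz 4 3 (by decide) (by decide)
  have z45 := hz 4 5 (by decide) (by decide)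
  have z50 := hz 5 0 (by decide) (by decide)
  have z51 := hz 5 1 (by decide) (by decide)
  have z52 := hz 5 2 (by decide) (by decide)
  have z53 := hz 5 3 (by decide) (by decide)
  have z54 := hz 5 4 (by decide) (by decide)
  ext i j
  fin_cases i <;> fin_cases j <;>
    simp (config := { decide := true }) [matG, coG, entG, z10, z20, z21, z23, z25, z30, z31, z32, z34, z40, z41, z42, z43, z45, z50, z51, z52, z53, z54] <;>
    linear_combination -tr


set_option maxHeartbeats 4000000 in
lemma matZ_gA (c : Fin 8 → ℂ) : (matZ c : M 6) ∈ gA leP3 := by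
  rw [mem_gA_iff]
  constructor
  · show ∑ i, _ = (0:ℂ)
    simp (config := { decide := true }) [matZ, entZ, Matrix.diag, Fin.sum_univ_six]
    try ring
  · intro p q h1 h2
    fin_cases p <;> fin_cases q <;>
      first
      | exact absurd rfl h1
      | exact absurd (by decide) h2
      | simp (config := { decide := true }) [matZ, entZ]


set_option maxHeartbeats 4000000 in
lemma matO_gA (c : Fin 8 → ℂ) : (matO c : M 6) ∈ gA leP3 := by
  rw [mem_gA_iff]
  constructor
  · show ∑ i, _ = (0:ℂ)
    simp (config := { decide := true }) [matO, entO, Matrix.diag, Fin.sum_univ_six]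
    try ring
  · intro p q h1 h2
    fin_cases p <;> fin_cases q <;>
      first
      | exact absurd rfl h1
      | exact absurd (by decide) h2
      | simp (config := { decide := true }) [matO, entO]


set_option maxHeartbeats 4000000 in
lemma matZ_eig (c : Fin 8 → ℂ) : adE H0 (matZ c) = (0:ℂ) • (matZ c : M 6) := by
  funext i j
  show (H0 * matZ c - matZ c * H0) i j = ((0:ℂ) • (matZ c : M 6)) i j
  fin_cases i <;> fin_cases j <;>
    simp (config := { decide := true }) [H0, matZ, entZ, Matrix.mul_apply, Matrix.sub_apply, Fin.sum_univ_six] <;> ring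

set_option maxHeartbeats 4000000 in
lemma matO_eig (c : Fin 8 → ℂ) : adE H0 (matO c) = (1:ℂ) • (matO c : M 6) := by
  funext i j
  show (H0 * matO c - matO c * H0) i j = ((1:ℂ) • (matO c : M 6)) i j
  fin_cases i <;> fin_cases j <;>
    simp (config := { decide := true }) [H0, matO, entO, Matrix.mul_apply, Matrix.sub_apply, Fin.sum_univ_six] <;> ring

set_option maxHeartbeats 4000000 in
lemma finrank_V0 : Module.finrank ℂ ↥(gA leP3 ⊓ Module.End.eigenspace (adE H0) 0) = 8 := by
  apply finrank_of_equiv_fun _ matZ coZ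
  · intro c
    exact Submodule.mem_inf.mpr ⟨matZ_gA c, Module.End.mem_eigenspace_iff.mpr (matZ_eig c)⟩
  · exact coZ_matZ
  · intro A hA
    obtain ⟨⟨htr, hz⟩, he⟩ := Submodule.mem_inf.mp hA
    have heq := Module.End.mem_eigenspace_iff.mp he
    have tr : A 0 0 + A 1 1 + A 2 2 + A 3 3 + A 4 4 + A 5 5 = 0 := by
      simpa [Matrix.trace, Matrix.diag, Fin.sum_univ_six] using htr
    have z10 := hz 1 0 (by decide) (by decide)
    have z20 := hz 2 0 (by decide) (by decide)
    have z21 := hz 2 1 (by decide) (by decide)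
    have z23 := hz 2 3 (by decide) (by decide)
    have z25 := hz 2 5 (by decide) (by decide)
    have z30 := hz 3 0 (by decide) (by decide)
    have z31 := hz 3 1 (by decide) (by decide)
    have z32 := hz 3 2 (by decide) (by decide)
    have z34 := hz 3 4 (by decide) (by decide)
    have z40 := hz 4 0 (by decide) (by decide)
    have z41 := hz 4 1 (by decide) (by decide)
    have z42 := hz 4 2 (by decide) (by decide)
    have z43 := hz 4 3 (by decide) (by decide)
    have z45 := hz 4 5 (by decide) (by decide)
    have z50 := hz 5 0 (by decide) (by decide)
    have z51 := hz 5 1 (by decide) (by decide)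
    have z52 := hz 5 2 (by decide) (by decide)
    have z53 := hz 5 3 (by decide) (by decide)
    have z54 := hz 5 4 (by decide) (by decide)
    have E02 := congrFun (congrFun heq 0) 2
    simp (config := { decide := true }) [adE, H0, LinearMap.sub_apply, LinearMap.mulLeft_apply, LinearMap.mulRight_apply, Matrix.mul_apply, Matrix.sub_apply, Fin.sum_univ_six] at E02
    have y02 : A 0 2 = 0 := by linear_combination E02
    have E03 := congrFun (congrFun heq 0) 3
    simp (config := { decide := true }) [adE, H0, LinearMap.sub_apply, LinearMap.mulLeft_apply, LinearMap.mulRight_apply, Matrix.mul_apply, Matrix.sub_apply, Fin.sum_univ_six] at E03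
    have y03 : A 0 3 = 0 := by linear_combination E03
    have E04 := congrFun (congrFun heq 0) 4
    simp (config := { decide := true }) [adE, H0, LinearMap.sub_apply, LinearMap.mulLeft_apply, LinearMap.mulRight_apply, Matrix.mul_apply, Matrix.sub_apply, Fin.sum_univ_six] at E04
    have y04 : A 0 4 = 0 := by linear_combination E04
    have E05 := congrFun (congrFun heq 0) 5
    simp (config := { decide := true }) [adE, H0, LinearMap.sub_apply, LinearMap.mulLeft_apply, LinearMap.mulRight_apply, Matrix.mul_apply, Matrix.sub_apply, Fin.sum_univ_six] at E05
    have y05 : A 0 5 = 0 := by linear_combination E05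
    have E12 := congrFun (congrFun heq 1) 2
    simp (config := { decide := true }) [adE, H0, LinearMap.sub_apply, LinearMap.mulLeft_apply, LinearMap.mulRight_apply, Matrix.mul_apply, Matrix.sub_apply, Fin.sum_univ_six] at E12
    have y12 : A 1 2 = 0 := by linear_combination E12
    have E13 := congrFun (congrFun heq 1) 3
    simp (config := { decide := true }) [adE, H0, LinearMap.sub_apply, LinearMap.mulLeft_apply, LinearMap.mulRight_apply, Matrix.mul_apply, Matrix.sub_apply, Fin.sum_univ_six] at E13
    have y13 : A 1 3 = 0 := by linear_combination E13
    have E14 := congrFun (congrFun heq 1) 4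
    simp (config := { decide := true }) [adE, H0, LinearMap.sub_apply, LinearMap.mulLeft_apply, LinearMap.mulRight_apply, Matrix.mul_apply, Matrix.sub_apply, Fin.sum_univ_six] at E14
    have y14 : A 1 4 = 0 := by linear_combination E14
    have E15 := congrFun (congrFun heq 1) 5
    simp (config := { decide := true }) [adE, H0, LinearMap.sub_apply, LinearMap.mulLeft_apply, LinearMap.mulRight_apply, Matrix.mul_apply, Matrix.sub_apply, Fin.sum_univ_six] at E15
    have y15 : A 1 5 = 0 := by linear_combination E15
    ext i j
    fin_cases i <;> fin_cases j <;>
      simp (config := { decide := true }) [matZ, coZ, entZ, z10, z20, z21, z23, z25, z30, z31, z32, z34, z40, z41, z42, z43, z45, z50, z51, z52, z53, z54, y02, y03, y04, y05, y12, y13, y14, y15] <;>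
      linear_combination -tr

set_option maxHeartbeats 4000000 in
lemma finrank_V1 : Module.finrank ℂ ↥(gA leP3 ⊓ Module.End.eigenspace (adE H0) 1) = 8 := by
  apply finrank_of_equiv_fun _ matO coO
  · intro c
    exact Submodule.mem_inf.mpr ⟨matO_gA c, Module.End.mem_eigenspace_iff.mpr (matO_eig c)⟩
  · exact coO_matO
  · intro A hA
    obtain ⟨⟨htr, hz⟩, he⟩ := Submodule.mem_inf.mp hA
    have heq := Module.End.mem_eigenspace_iff.mp he
    have z10 := hz 1 0 (by decide) (by decide)
    have z20 := hz 2 0 (by decide) (by decide)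
    have z21 := hz 2 1 (by decide) (by decide)
    have z23 := hz 2 3 (by decide) (by decide)
    have z25 := hz 2 5 (by decide) (by decide)
    have z30 := hz 3 0 (by decide) (by decide)
    have z31 := hz 3 1 (by decide) (by decide)
    have z32 := hz 3 2 (by decide) (by decide)
    have z34 := hz 3 4 (by decide) (by decide)
    have z40 := hz 4 0 (by decide) (by decide)
    have z41 := hz 4 1 (by decide) (by decide)
    have z42 := hz 4 2 (by decide) (by decide)
    have z43 := hz 4 3 (by decide) (by decide)
    have z45 := hz 4 5 (by decide) (by decide)
    have z50 := hz 5 0 (by decide) (by decide)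
    have z51 := hz 5 1 (by decide) (by decide)
    have z52 := hz 5 2 (by decide) (by decide)
    have z53 := hz 5 3 (by decide) (by decide)
    have z54 := hz 5 4 (by decide) (by decide)
    have F01 := congrFun (congrFun heq 0) 1
    simp (config := { decide := true }) [adE, H0, LinearMap.sub_apply, LinearMap.mulLeft_apply, LinearMap.mulRight_apply, Matrix.mul_apply, Matrix.sub_apply, Fin.sum_univ_six] at F01
    have w01 : A 0 1 = 0 := by linear_combination -F01
    have F24 := congrFun (congrFun heq 2) 4
    simp (config := { decide := true }) [adE, H0, LinearMap.sub_apply, LinearMap.mulLeft_apply, LinearMap.mulRight_apply, Matrix.mul_apply, Matrix.sub_apply, Fin.sum_univ_six] at F24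
    have w24 : A 2 4 = 0 := by linear_combination -F24
    have F35 := congrFun (congrFun heq 3) 5
    simp (config := { decide := true }) [adE, H0, LinearMap.sub_apply, LinearMap.mulLeft_apply, LinearMap.mulRight_apply, Matrix.mul_apply, Matrix.sub_apply, Fin.sum_univ_six] at F35
    have w35 : A 3 5 = 0 := by linear_combination -F35
    have F00 := congrFun (congrFun heq 0) 0
    simp (config := { decide := true }) [adE, H0, LinearMap.sub_apply, LinearMap.mulLeft_apply, LinearMap.mulRight_apply, Matrix.mul_apply, Matrix.sub_apply, Fin.sum_univ_six] at F00
    have w00 : A 0 0 = 0 := by linear_combination -F00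
    have F11 := congrFun (congrFun heq 1) 1
    simp (config := { decide := true }) [adE, H0, LinearMap.sub_apply, LinearMap.mulLeft_apply, LinearMap.mulRight_apply, Matrix.mul_apply, Matrix.sub_apply, Fin.sum_univ_six] at F11
    have w11 : A 1 1 = 0 := by linear_combination -F11
    have F22 := congrFun (congrFun heq 2) 2
    simp (config := { decide := true }) [adE, H0, LinearMap.sub_apply, LinearMap.mulLeft_apply, LinearMap.mulRight_apply, Matrix.mul_apply, Matrix.sub_apply, Fin.sum_univ_six] at F22
    have w22 : A 2 2 = 0 := by linear_combination -F22
    have F33 := congrFun (congrFun heq 3) 3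
    simp (config := { decide := true }) [adE, H0, LinearMap.sub_apply, LinearMap.mulLeft_apply, LinearMap.mulRight_apply, Matrix.mul_apply, Matrix.sub_apply, Fin.sum_univ_six] at F33
    have w33 : A 3 3 = 0 := by linear_combination -F33
    have F44 := congrFun (congrFun heq 4) 4
    simp (config := { decide := true }) [adE, H0, LinearMap.sub_apply, LinearMap.mulLeft_apply, LinearMap.mulRight_apply, Matrix.mul_apply, Matrix.sub_apply, Fin.sum_univ_six] at F44
    have w44 : A 4 4 = 0 := by linear_combination -F44
    have F55 := congrFun (congrFun heq 5) 5
    simp (config := { decide := true }) [adE, H0, LinearMap.sub_apply, LinearMap.mulLeft_apply, LinearMap.mulRight_apply, Matrix.mul_apply, Matrix.sub_apply, Fin.sum_univ_six] at F55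
    have w55 : A 5 5 = 0 := by linear_combination -F55
    ext i j
    fin_cases i <;> fin_cases j <;>
      simp (config := { decide := true }) [matO, coO, entO, z10, z20, z21, z23, z25, z30, z31, z32, z34, z40, z41, z42, z43, z45, z50, z51, z52, z53, z54, w01, w24, w35, w00, w11, w22, w33, w44, w55]

/-- `F` is Frobenius on `g_A(P₃)` and the spectrum is binary:
eigenvalues `0` and `1`, each with multiplicity `8`. -/
theorem P3_frobenius_binary_spectrum :
    IsFrobeniusOn (gA leP3) (FS SP3) ∧
    ∀ H : M 6, IsPrincipal (gA leP3) (FS SP3) H →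
      eigMult (gA leP3) H 0 = 8 ∧ eigMult (gA leP3) H 1 = 8 ∧
      eigMult (gA leP3) H 0 + eigMult (gA leP3) H 1 = Module.finrank ℂ ↥(gA leP3) := by
  refine ⟨frob, ?_⟩
  intro H hH
  have hHeq : H = H0 := principal_unique H hH
  subst hHeq
  have h0 : eigMult (gA leP3) H0 0 = 8 := by
    rw [eigMult]; exact finrank_V0
  have h1 : eigMult (gA leP3) H0 1 = 8 := by
    rw [eigMult]; exact finrank_V1
  exact ⟨h0, h1, by rw [h0, h1, finrank_gA]⟩

end
end LiePosets
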